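/- There is an action β of the group Γ by *-automorphisms of B, induced by the shift on ℓ∞(Γ, A) (i.e. (β_s ξ)(x) = ξ(x − s)), satisfying β_s ∘ μ_x = μ_{x+s} for all s, x ∈ Γ; moreover the ideal I is β-invariant. -/

import Mathlib

open scoped ENNReal

variable {Γ : Type*} [AddCommGroup Γ] [LinearOrder Γ] [IsOrderedAddMonoid Γ] {A : Type*} [NonUnitalCStarAlgebra A]

/-- The map `μ_x : A → ℓ∞(Γ, A)`, `(μ_x a)(y) = α_{y-x}(a)` for `y ≥ x` and `0` otherwise. -/
noncomputable def mu (α : Γ → (A →⋆ₙₐ[ℂ] A)) (x : Γ) (a : A) :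
    lp (fun _ : Γ => A) ∞ :=
  ⟨fun y => if x ≤ y then α (y - x) a else 0,
    memℓp_infty ⟨‖a‖, by
      rintro r ⟨y, rfl⟩
      dsimp only
      split_ifs
      · exact NonUnitalStarAlgHom.norm_apply_le _ _
      · simp⟩⟩

/-- The C*-subalgebra `B = cl span {μ_x(a) : x ∈ Γ, a ∈ A}` of `ℓ∞(Γ, A)`, as a subset. -/
noncomputable def BSet (α : Γ → (A →⋆ₙₐ[ℂ] A)) : Set (lp (fun _ : Γ => A) ∞) :=
  closure (Submodule.span ℂ {ξ : lp (fun _ : Γ => A) ∞ | ∃ x a, ξ = mu α x a} : Set _)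

/-- The ideal `I = cl span {μ_x(a) - μ_y(α_{y-x}(a)) : x < y ∈ Γ, a ∈ A}`, as a subset. -/
noncomputable def ISet (α : Γ → (A →⋆ₙₐ[ℂ] A)) : Set (lp (fun _ : Γ => A) ∞) :=
  closure (Submodule.span ℂ
    {ξ : lp (fun _ : Γ => A) ∞ | ∃ x y a, x < y ∧ ξ = mu α x a - mu α y (α (y - x) a)} : Set _)

/-- The shift by `s` on `ℓ∞(Γ, E)`: `(β_s ξ)(x) = ξ(x - s)`. -/
noncomputable def shiftL {Γ : Type*} [AddCommGroup Γ] [LinearOrder Γ] [IsOrderedAddMonoid Γ] {E : Type*}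
    [NormedAddCommGroup E] (s : Γ) (ξ : lp (fun _ : Γ => E) ∞) : lp (fun _ : Γ => E) ∞ :=
  ⟨fun x => ξ (x - s), memℓp_infty ⟨‖ξ‖, by
    rintro r ⟨x, rfl⟩
    exact lp.norm_apply_le_norm ENNReal.top_ne_zero ξ (x - s)⟩⟩

lemma shiftL_apply {Γ : Type*} [AddCommGroup Γ] [LinearOrder Γ] [IsOrderedAddMonoid Γ] {E : Type*}
    [NormedAddCommGroup E] (s : Γ) (ξ : lp (fun _ : Γ => E) ∞) (x : Γ) :
    shiftL s ξ x = ξ (x - s) := rfl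

lemma shiftL_zero {Γ : Type*} [AddCommGroup Γ] [LinearOrder Γ] [IsOrderedAddMonoid Γ] {E : Type*}
    [NormedAddCommGroup E] (ξ : lp (fun _ : Γ => E) ∞) : shiftL (0 : Γ) ξ = ξ :=
  lp.ext <| funext fun x => by simp [shiftL_apply]

lemma shiftL_add_shift {Γ : Type*} [AddCommGroup Γ] [LinearOrder Γ] [IsOrderedAddMonoid Γ] {E : Type*}
    [NormedAddCommGroup E] (s t : Γ) (ξ : lp (fun _ : Γ => E) ∞) :
    shiftL (s + t) ξ = shiftL s (shiftL t ξ) :=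
  lp.ext <| funext fun x => by simp [shiftL_apply, sub_sub]

lemma shiftL_add (s : Γ) (ξ η : lp (fun _ : Γ => A) ∞) :
    shiftL s (ξ + η) = shiftL s ξ + shiftL s η :=
  lp.ext <| funext fun x => by
    simp only [shiftL_apply, lp.coeFn_add, Pi.add_apply]

lemma shiftL_mul (s : Γ) (ξ η : lp (fun _ : Γ => A) ∞) :
    shiftL s (ξ * η) = shiftL s ξ * shiftL s η :=
  lp.ext <| funext fun x => by
    simp only [shiftL_apply, lp.infty_coeFn_mul, Pi.mul_apply]

lemma shiftL_smul (s : Γ) (c : ℂ) (ξ : lp (fun _ : Γ => A) ∞) :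
    shiftL s (c • ξ) = c • shiftL s ξ :=
  lp.ext <| funext fun x => by
    simp only [shiftL_apply, lp.coeFn_smul, Pi.smul_apply]

lemma shiftL_sub (s : Γ) (ξ η : lp (fun _ : Γ => A) ∞) :
    shiftL s (ξ - η) = shiftL s ξ - shiftL s η :=
  lp.ext <| funext fun x => by
    simp only [shiftL_apply, lp.coeFn_sub, Pi.sub_apply]

lemma shiftL_star (s : Γ) (ξ : lp (fun _ : Γ => A) ∞) :
    shiftL s (star ξ) = star (shiftL s ξ) :=
  lp.ext <| funext fun x => by
    simp only [shiftL_apply, lp.coeFn_star, Pi.star_apply]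

lemma shiftL_neg_shiftL {Γ : Type*} [AddCommGroup Γ] [LinearOrder Γ] [IsOrderedAddMonoid Γ] {E : Type*}
    [NormedAddCommGroup E] (s : Γ) (ξ : lp (fun _ : Γ => E) ∞) :
    shiftL (-s) (shiftL s ξ) = ξ := by
  rw [← shiftL_add_shift]; simp [shiftL_zero]

lemma norm_shiftL_le {Γ : Type*} [AddCommGroup Γ] [LinearOrder Γ] [IsOrderedAddMonoid Γ] {E : Type*}
    [NormedAddCommGroup E] (s : Γ) (ξ : lp (fun _ : Γ => E) ∞) :
    ‖shiftL s ξ‖ ≤ ‖ξ‖ :=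
  lp.norm_le_of_forall_le (norm_nonneg ξ) fun x =>
    lp.norm_apply_le_norm ENNReal.top_ne_zero ξ (x - s)

lemma norm_shiftL {Γ : Type*} [AddCommGroup Γ] [LinearOrder Γ] [IsOrderedAddMonoid Γ] {E : Type*}
    [NormedAddCommGroup E] (s : Γ) (ξ : lp (fun _ : Γ => E) ∞) :
    ‖shiftL s ξ‖ = ‖ξ‖ := by
  refine le_antisymm (norm_shiftL_le s ξ) ?_
  conv_lhs => rw [← shiftL_neg_shiftL s ξ]
  exact norm_shiftL_le _ _

/-- `shiftL s` as a linear isometry equivalence. -/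
noncomputable def shiftE (α : Γ → (A →⋆ₙₐ[ℂ] A)) (s : Γ) :
    lp (fun _ : Γ => A) ∞ ≃ₗᵢ[ℂ] lp (fun _ : Γ => A) ∞ where
  toFun := shiftL s
  invFun := shiftL (-s)
  left_inv := shiftL_neg_shiftL s
  right_inv ξ := by
    show shiftL s (shiftL (-s) ξ) = ξ
    rw [← shiftL_add_shift]; simp [shiftL_zero]
  map_add' := shiftL_add s
  map_smul' := shiftL_smul s
  norm_map' := norm_shiftL s

lemma shiftL_mu (α : Γ → (A →⋆ₙₐ[ℂ] A)) (s x : Γ) (a : A) :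
    shiftL s (mu α x a) = mu α (x + s) a :=
  lp.ext <| funext fun y => by
    show (if x ≤ y - s then α (y - s - x) a else 0) = (if x + s ≤ y then α (y - (x + s)) a else 0)
    simp only [sub_sub, add_comm s x, le_sub_iff_add_le]

lemma shiftL_image_closure_span (α : Γ → (A →⋆ₙₐ[ℂ] A)) (s : Γ)
    (S : Set (lp (fun _ : Γ => A) ∞)) (hS : shiftL s '' S = S) :
    shiftL s '' closure (Submodule.span ℂ S : Set (lp (fun _ : Γ => A) ∞))
      = closure (Submodule.span ℂ S : Set (lp (fun _ : Γ => A) ∞)) := by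
  have hcoe : shiftL s = ⇑((shiftE α s).toHomeomorph) := rfl
  rw [hcoe, Homeomorph.image_closure]
  have h2 : ⇑((shiftE α s).toHomeomorph) '' (Submodule.span ℂ S : Set _)
      = (Submodule.map ((shiftE α s) : lp (fun _ : Γ => A) ∞ →ₗ[ℂ] lp (fun _ : Γ => A) ∞)
          (Submodule.span ℂ S) : Set _) := rfl
  rw [h2, Submodule.map_span]
  exact congrArg (fun T : Set (lp (fun _ : Γ => A) ∞) =>
    closure (Submodule.span ℂ T : Set (lp (fun _ : Γ => A) ∞))) hS

theorem shift_action_on_B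
    {Γ : Type*} [AddCommGroup Γ] [LinearOrder Γ] [IsOrderedAddMonoid Γ] {A : Type*} [NonUnitalCStarAlgebra A]
    (α : Γ → (A →⋆ₙₐ[ℂ] A))
    (hα0 : ∀ a : A, α 0 a = a)
    (hαadd : ∀ s t : Γ, 0 ≤ s → 0 ≤ t → ∀ a : A, α (s + t) a = α s (α t a)) :
    (∀ (s : Γ) (ξ : lp (fun _ : Γ => A) ∞), shiftL (0 : Γ) ξ = ξ ∧
      ∀ t : Γ, shiftL (s + t) ξ = shiftL s (shiftL t ξ)) ∧
    (∀ (s : Γ) (ξ η : lp (fun _ : Γ => A) ∞),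
      shiftL s (ξ + η) = shiftL s ξ + shiftL s η ∧
      shiftL s (ξ * η) = shiftL s ξ * shiftL s η) ∧
    (∀ (s : Γ) (c : ℂ) (ξ : lp (fun _ : Γ => A) ∞), shiftL s (c • ξ) = c • shiftL s ξ) ∧
    (∀ (s : Γ) (ξ : lp (fun _ : Γ => A) ∞), shiftL s (star ξ) = star (shiftL s ξ)) ∧
    (∀ (s x : Γ) (a : A), shiftL s (mu α x a) = mu α (x + s) a) ∧
    (∀ s : Γ, shiftL s '' BSet α = BSet α) ∧
    (∀ s : Γ, shiftL s '' ISet α = ISet α) := by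
  refine ⟨fun s ξ => ⟨shiftL_zero ξ, fun t => shiftL_add_shift s t ξ⟩,
    fun s ξ η => ⟨shiftL_add s ξ η, shiftL_mul s ξ η⟩,
    shiftL_smul, shiftL_star, shiftL_mu α, fun s => ?_, fun s => ?_⟩
  · refine shiftL_image_closure_span α s _ ?_
    apply Set.Subset.antisymm
    · rintro _ ⟨_, ⟨x, a, rfl⟩, rfl⟩
      exact ⟨x + s, a, shiftL_mu α s x a⟩
    · rintro _ ⟨x, a, rfl⟩
      exact ⟨mu α (x - s) a, ⟨x - s, a, rfl⟩, by rw [shiftL_mu, sub_add_cancel]⟩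
  · refine shiftL_image_closure_span α s _ ?_
    apply Set.Subset.antisymm
    · rintro _ ⟨_, ⟨x, y, a, hxy, rfl⟩, rfl⟩
      refine ⟨x + s, y + s, a, by simpa using hxy, ?_⟩
      rw [shiftL_sub, shiftL_mu, shiftL_mu, add_sub_add_right_eq_sub]
    · rintro _ ⟨x, y, a, hxy, rfl⟩
      refine ⟨mu α (x - s) a - mu α (y - s) (α (y - x) a),
        ⟨x - s, y - s, a, by simpa using hxy, by rw [sub_sub_sub_cancel_right]⟩, ?_⟩
      rw [shiftL_sub, shiftL_mu, shiftL_mu, sub_add_cancel, sub_add_cancel]
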